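/- arXiv:1304.7714 — 3 statements merged into one kernel-verified Lean document; each statement's English description precedes it below -/
import Mathlib

section
/- For every n ≥ 1, the ideal I_{ω^n} of subsets of ω^n not containing a copy of ω^n is isomorphic to the n-fold Fubini power Fin^n of the Fréchet ideal. -/
open Ordinal Set

/-- The Fubini product of the Fréchet ideal `Fin` on ω with an ideal `J` on `Y`. -/
def fub {Y : Type*} (J : Set (Set Y)) : Set (Set (ℕ × Y)) :=
  {A | {i : ℕ | {y : Y | (i, y) ∈ A} ∉ J}.Finite}

/-- The underlying set of the n-fold Fubini power: `T 0 = ω`, `T (n+1) = ω × T n`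
(so `T (n-1)` carries the paper's `Fin^n`). -/
def T : ℕ → Type
  | 0 => ℕ
  | n + 1 => ℕ × T n

/-- The iterated Fubini powers of the Fréchet ideal: `finPow 0 = Fin`,
`finPow (n+1) = Fin × finPow n` (the paper's `Fin^{n+1}`). -/
def finPow : (n : ℕ) → Set (Set (T n))
  | 0 => {A : Set ℕ | A.Finite}
  | n + 1 => fub (finPow n)

/-- The ideal `I_α` of subsets of `α` into which `α` does not embed. -/
def ordIdeal (α : Ordinal) : Set (Set (Set.Iio α)) :=
  {A | ¬ Nonempty ((Set.Iio α) ↪o A)}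

namespace Stmt14Aux

universe u

variable {α : Type u} {r : α → α → Prop} [IsWellOrder α r]

abbrev Subrel {γ : Type*} (r' : γ → γ → Prop) (s : Set γ) : s → s → Prop :=
  _root_.Subrel r' (· ∈ s)

theorem type_subrel_mono {s t : Set α} (h : s ⊆ t) :
    type (Subrel r s) ≤ type (Subrel r t) :=
  type_le_iff'.2 ⟨⟨⟨fun x => ⟨x.1, h x.2⟩,
    fun a b hab => Subtype.ext (Subtype.mk_eq_mk.1 hab)⟩, Iff.rfl⟩⟩

theorem type_subrel_le (s : Set α) : type (Subrel r s) ≤ type r :=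
  type_le_iff'.2 ⟨Subrel.relEmbedding r s⟩

theorem type_split (C L : Set α) (hL : ∀ ⦃x y⦄, r x y → y ∈ L → x ∈ L) :
    type (Subrel r C) ≤ type (Subrel r (C ∩ L)) + type (Subrel r (C \ L)) := by
  classical
  rw [← type_sum_lex]
  refine type_le_iff'.2 ⟨RelEmbedding.ofMonotone (fun x => if h : x.1 ∈ L then
    Sum.inl ⟨x.1, x.2, h⟩ else Sum.inr ⟨x.1, x.2, h⟩) ?_⟩
  intro a b hab
  by_cases ha : a.1 ∈ L <;> by_cases hb : b.1 ∈ L <;>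
    [rw [dif_pos ha, dif_pos hb]; rw [dif_pos ha, dif_neg hb];
     rw [dif_neg ha, dif_pos hb]; rw [dif_neg ha, dif_neg hb]]
  · exact Sum.Lex.inl hab
  · exact Sum.Lex.sep _ _
  · exact absurd (hL hab hb) ha
  · exact Sum.Lex.inr hab

theorem typein_subrel (C : Set α) (p : ↥C) :
    typein (Subrel r C) p = type (Subrel r {q ∈ C | r q ↑p}) := by
  rw [← type_subrel (Subrel r C) p]
  exact type_eq.2 ⟨⟨⟨fun x => ⟨x.1.1, x.1.2, x.2⟩, fun y => ⟨⟨y.1, y.2.1⟩, y.2.2⟩,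
    fun x => rfl, fun y => rfl⟩, Iff.rfl⟩⟩

theorem type_le_of_segments (C : Set α) {β : Ordinal.{u}}
    (h : ∀ p : ↥C, type (Subrel r {q ∈ C | r q ↑p}) < β) :
    type (Subrel r C) ≤ β := by
  by_contra hlt
  push_neg at hlt
  obtain ⟨p, hp⟩ := typein_surj (Subrel r C) hlt
  rw [typein_subrel] at hp
  exact absurd (hp ▸ h p) (lt_irrefl β)

end Stmt14Aux

namespace Stmt14Aux

/-- The image of a subrel under a relation isomorphism. -/
noncomputable def imageSubrel {α β : Type*} {r : α → α → Prop} {s : β → β → Prop}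
    (F : r ≃r s) (A : Set α) :
    Subrel r A ≃r Subrel s (⇑F '' A) where
  toEquiv := F.toEquiv.image A
  map_rel_iff' := F.map_rel_iff

/-- The lexicographic relation on `T n` whose order type is `ω ^ (n + 1)`. -/
def R : (n : ℕ) → T n → T n → Prop
  | 0 => ((· < ·) : ℕ → ℕ → Prop)
  | n + 1 => Prod.Lex ((· < ·) : ℕ → ℕ → Prop) (R n)

instance instWOR : ∀ n, IsWellOrder (T n) (R n)
  | 0 => inferInstanceAs (IsWellOrder ℕ (· < ·))
  | n + 1 =>
    letI := instWOR n
    inferInstanceAs (IsWellOrder (ℕ × T n) (Prod.Lex _ _))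

theorem typeR : ∀ n, type (R n) = omega0 ^ ((n : Ordinal) + 1)
  | 0 => by
    show type ((· < ·) : ℕ → ℕ → Prop) = _
    rw [type_nat_lt]
    simp
  | n + 1 => by
    show type (Prod.Lex ((· < ·) : ℕ → ℕ → Prop) (R n)) = _
    rw [type_prod_lex, typeR n, type_nat_lt, ← opow_succ, ← Ordinal.add_one_eq_succ, Nat.cast_succ]

section Lex

variable {Y : Type} (s : Y → Y → Prop) [IsWellOrder Y s]

theorem type_slice_le (B : Set (ℕ × Y)) (k : ℕ) :
    type (Subrel (Prod.Lex ((· < ·) : ℕ → ℕ → Prop) s) {p ∈ B | p.1 = k}) ≤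
      type (Subrel s {y | (k, y) ∈ B}) := by
  refine type_le_iff'.2 ⟨RelEmbedding.ofMonotone (fun x => ⟨x.1.2, ?_⟩) ?_⟩
  · obtain ⟨⟨i, y⟩, hB, hk⟩ := x
    subst hk
    exact hB
  · rintro ⟨⟨i, y⟩, hB, hi⟩ ⟨⟨j, z⟩, hB', hj⟩ hab
    dsimp only at hi hj
    subst hi; subst hj
    simp only [subrel_val, Prod.lex_def] at hab
    rcases hab with h | ⟨-, h⟩
    · exact absurd h (lt_irrefl _)
    · exact h

theorem type_low (B : Set (ℕ × Y)) {β : Ordinal}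
    (hβ : ∀ k, type (Subrel s {y | (k, y) ∈ B}) ≤ β) (k : ℕ) :
    type (Subrel (Prod.Lex ((· < ·) : ℕ → ℕ → Prop) s) {p ∈ B | p.1 < k}) ≤ β * k := by
  induction k with
  | zero =>
    have he : {p ∈ B | p.1 < 0} = (∅ : Set (ℕ × Y)) := by ext p; simp
    rw [he, type_eq_zero_iff_isEmpty.2 (by infer_instance)]
    simp
  | succ k ih =>
    have hL : ∀ ⦃x y : ℕ × Y⦄, Prod.Lex ((· < ·) : ℕ → ℕ → Prop) s x y →
        y ∈ {p : ℕ × Y | p.1 < k} → x ∈ {p : ℕ × Y | p.1 < k} := by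
      rintro ⟨i, a⟩ ⟨j, b⟩ hxy hy
      rw [Prod.lex_def] at hxy
      simp only [mem_setOf_eq] at hy ⊢
      dsimp only at hxy
      rcases hxy with h | ⟨h, -⟩
      · omega
      · omega
    have h1 : {p ∈ B | p.1 < k + 1} ∩ {p : ℕ × Y | p.1 < k} = {p ∈ B | p.1 < k} := by
      ext p
      constructor
      · rintro ⟨⟨hB, _⟩, h2⟩; exact ⟨hB, h2⟩
      · rintro ⟨hB, h2⟩; exact ⟨⟨hB, by omega⟩, h2⟩
    have h2 : {p ∈ B | p.1 < k + 1} \ {p : ℕ × Y | p.1 < k} = {p ∈ B | p.1 = k} := by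
      ext p
      constructor
      · rintro ⟨⟨hB, h1⟩, h2⟩; exact ⟨hB, by simp at h2; omega⟩
      · rintro ⟨hB, h1⟩; exact ⟨⟨hB, by omega⟩, by simp; omega⟩
    calc type (Subrel (Prod.Lex ((· < ·) : ℕ → ℕ → Prop) s) {p ∈ B | p.1 < k + 1})
        ≤ type (Subrel _ ({p ∈ B | p.1 < k + 1} ∩ {p : ℕ × Y | p.1 < k}))
          + type (Subrel _ ({p ∈ B | p.1 < k + 1} \ {p : ℕ × Y | p.1 < k})) :=
          type_split _ _ hL
      _ ≤ β * k + β := by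
          rw [h1, h2]
          exact add_le_add ih ((type_slice_le s B k).trans (hβ k))
      _ = β * (k + 1 : ℕ) := by rw [Nat.cast_succ, mul_add_one]

theorem type_low_lt (B : Set (ℕ × Y)) {β : Ordinal} (hβ0 : 0 < β)
    (hprin : ∀ a b, a < β → b < β → a + b < β)
    (hβ : ∀ k, type (Subrel s {y | (k, y) ∈ B}) < β) (k : ℕ) :
    type (Subrel (Prod.Lex ((· < ·) : ℕ → ℕ → Prop) s) {p ∈ B | p.1 < k}) < β := by
  induction k with
  | zero =>
    have he : {p ∈ B | p.1 < 0} = (∅ : Set (ℕ × Y)) := by ext p; simp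
    rw [he, type_eq_zero_iff_isEmpty.2 (by infer_instance)]
    exact hβ0
  | succ k ih =>
    have hL : ∀ ⦃x y : ℕ × Y⦄, Prod.Lex ((· < ·) : ℕ → ℕ → Prop) s x y →
        y ∈ {p : ℕ × Y | p.1 < k} → x ∈ {p : ℕ × Y | p.1 < k} := by
      rintro ⟨i, a⟩ ⟨j, b⟩ hxy hy
      rw [Prod.lex_def] at hxy
      simp only [mem_setOf_eq] at hy ⊢
      dsimp only at hxy
      rcases hxy with h | ⟨h, -⟩
      · omega
      · omega
    have h1 : {p ∈ B | p.1 < k + 1} ∩ {p : ℕ × Y | p.1 < k} = {p ∈ B | p.1 < k} := by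
      ext p
      constructor
      · rintro ⟨⟨hB, _⟩, h2⟩; exact ⟨hB, h2⟩
      · rintro ⟨hB, h2⟩; exact ⟨⟨hB, by omega⟩, h2⟩
    have h2 : {p ∈ B | p.1 < k + 1} \ {p : ℕ × Y | p.1 < k} = {p ∈ B | p.1 = k} := by
      ext p
      constructor
      · rintro ⟨⟨hB, h1⟩, h2⟩; exact ⟨hB, by simp at h2; omega⟩
      · rintro ⟨hB, h1⟩; exact ⟨⟨hB, by omega⟩, by simp; omega⟩
    refine lt_of_le_of_lt (type_split {p ∈ B | p.1 < k + 1} {p : ℕ × Y | p.1 < k} hL) ?_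
    rw [h1, h2]
    exact hprin _ _ ih (lt_of_le_of_lt (type_slice_le s B k) (hβ k))

theorem type_high (C : Set (ℕ × Y)) {β : Ordinal} (hβ0 : 0 < β)
    (hprin : ∀ a b, a < β → b < β → a + b < β)
    (hβ : ∀ k, type (Subrel s {y | (k, y) ∈ C}) < β) :
    type (Subrel (Prod.Lex ((· < ·) : ℕ → ℕ → Prop) s) C) ≤ β := by
  apply type_le_of_segments
  intro p
  have hsub : {q ∈ C | Prod.Lex ((· < ·) : ℕ → ℕ → Prop) s q ↑p} ⊆
      {q ∈ C | q.1 < p.1.1 + 1} := by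
    rintro ⟨i, a⟩ ⟨hC, hlex⟩
    refine ⟨hC, ?_⟩
    rw [Prod.lex_def] at hlex
    dsimp only at hlex
    rcases hlex with h | ⟨h, -⟩
    · omega
    · omega
  exact lt_of_le_of_lt (type_subrel_mono hsub) (type_low_lt s C hβ0 hprin hβ (p.1.1 + 1))

end Lex

end Stmt14Aux

namespace Stmt14Aux

theorem main : ∀ n (B : Set (T n)),
    B ∈ finPow n ↔ type (Subrel (R n) B) < omega0 ^ ((n : Ordinal) + 1)
  | 0, B => by
    rw [show ((0 : ℕ) : Ordinal) + 1 = 1 by simp, opow_one]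
    show B.Finite ↔ _
    constructor
    · intro hB
      by_contra h
      push_neg at h
      rw [← type_nat_lt] at h
      obtain ⟨f⟩ := type_le_iff'.1 h
      haveI : Finite ↥B := hB.to_subtype
      haveI : Finite ℕ := Finite.of_injective (⇑f) f.injective
      exact not_finite ℕ
    · intro h
      obtain ⟨m, hm⟩ := lt_omega0.1 h
      have hcard : (Cardinal.mk ↥B) = m := by
        rw [← card_type (Subrel (R 0) B), hm, card_nat]
      rw [← Set.finite_coe_iff]
      exact Cardinal.lt_aleph0_iff_finite.1 (hcard ▸ Cardinal.nat_lt_aleph0 m)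
  | n + 1, B => by
    have IH := main n
    set β := omega0 ^ ((n : Ordinal) + 1) with hβdef
    have hβ0 : (0 : Ordinal) < β := opow_pos _ omega0_pos
    have hprin : ∀ a b, a < β → b < β → a + b < β := fun a b ha hb =>
      principal_add_omega0_opow _ ha hb
    have hbound : omega0 ^ (((n + 1 : ℕ) : Ordinal) + 1) = β * omega0 := by
      rw [hβdef, ← opow_succ, ← Ordinal.add_one_eq_succ, Nat.cast_succ]
    rw [hbound]
    have hRsucc : ∀ (C : Set (T (n + 1))), type (Subrel (R (n + 1)) C) =
        type (Subrel (Prod.Lex ((· < ·) : ℕ → ℕ → Prop) (R n)) C) := fun _ => rfl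
    constructor
    · -- finitely many big sections ⇒ small type
      intro hB
      obtain ⟨N, hN⟩ := (hB : {i : ℕ | {y | (i, y) ∈ B} ∉ finPow n}.Finite).bddAbove
      have hsec : ∀ i, N + 1 ≤ i → type (Subrel (R n) {y | (i, y) ∈ B}) < β := by
        intro i hi
        by_contra h'
        have hmem : {y : T n | (i, y) ∈ B} ∉ finPow n := fun hmem => h' ((IH _).1 hmem)
        have := hN hmem
        omega
      have hL : ∀ ⦃x y : ℕ × T n⦄, Prod.Lex ((· < ·) : ℕ → ℕ → Prop) (R n) x y →
          y ∈ {p : ℕ × T n | p.1 < N + 1} → x ∈ {p : ℕ × T n | p.1 < N + 1} := by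
        rintro ⟨i, a⟩ ⟨j, b⟩ hxy hy
        rw [Prod.lex_def] at hxy
        simp only [mem_setOf_eq] at hy ⊢
        dsimp only at hxy
        rcases hxy with h | ⟨h, -⟩
        · omega
        · omega
      rw [hRsucc]
      have hsplit := type_split (r := Prod.Lex ((· < ·) : ℕ → ℕ → Prop) (R n)) B
        {p : ℕ × T n | p.1 < N + 1} hL
      have hinter : B ∩ {p : ℕ × T n | p.1 < N + 1} = {p ∈ B | p.1 < N + 1} := rfl
      have hlow : type (Subrel (Prod.Lex ((· < ·) : ℕ → ℕ → Prop) (R n))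
          {p ∈ B | p.1 < N + 1}) ≤ β * (N + 1 : ℕ) := by
        refine type_low (R n) B (fun k => ?_) (N + 1)
        exact (type_subrel_le _).trans_eq (typeR n)
      have hhigh : type (Subrel (Prod.Lex ((· < ·) : ℕ → ℕ → Prop) (R n))
          (B \ {p : ℕ × T n | p.1 < N + 1})) ≤ β := by
        refine type_high (R n) _ hβ0 hprin (fun k => ?_)
        by_cases hk : N + 1 ≤ k
        · refine lt_of_le_of_lt (type_subrel_mono ?_) (hsec k hk)
          rintro y ⟨hy, -⟩
          exact hy
        · have : {y : T n | (k, y) ∈ B \ {p : ℕ × T n | p.1 < N + 1}} = ∅ := by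
            ext y
            simp only [mem_setOf_eq, mem_diff, mem_empty_iff_false, iff_false]
            rintro ⟨-, hmem⟩
            exact hmem (show k < N + 1 by omega)
          rw [type_eq_zero_iff_isEmpty.2 (by exact ⟨fun y => hk (by have h := y.2; simp only [mem_setOf_eq, mem_diff] at h; exact not_lt.1 h.2)⟩)]
          exact hβ0
      calc type (Subrel (Prod.Lex ((· < ·) : ℕ → ℕ → Prop) (R n)) B)
          ≤ _ + _ := hsplit
        _ ≤ β * (N + 1 : ℕ) + β := by
            exact add_le_add hlow hhigh
        _ = β * ((N + 1 : ℕ) + 1) := by rw [mul_add_one]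
        _ < β * omega0 := by
            refine (mul_lt_mul_iff_right₀ hβ0).2 ?_
            have : ((N + 1 : ℕ) : Ordinal) + 1 = ((N + 2 : ℕ) : Ordinal) := by
              push_cast
              rw [add_assoc, one_add_one_eq_two]
            rw [this]
            exact nat_lt_omega0 _
    · -- small type ⇒ finitely many big sections
      intro h
      by_contra hB
      have hSinf : {i : ℕ | {y : T n | (i, y) ∈ B} ∉ finPow n}.Infinite := hB
      set S := {i : ℕ | {y : T n | (i, y) ∈ B} ∉ finPow n} with hS
      haveI : Infinite ↥S := hSinf.to_subtype
      haveI : DecidablePred (· ∈ S) := Classical.decPred _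
      let g : ℕ ≃o ↥S := Nat.Subtype.orderIsoOfNat S
      have hf : ∀ i : ↥S, Nonempty ((R n) ↪r Subrel (R n) {y : T n | ((i : ℕ), y) ∈ B}) := by
        intro i
        apply type_le_iff'.1
        rw [typeR n]
        by_contra hcon
        push_neg at hcon
        exact i.2 ((IH _).2 hcon)
      have f : ∀ i : ↥S, (R n) ↪r Subrel (R n) {y : T n | ((i : ℕ), y) ∈ B} :=
        fun i => Classical.choice (hf i)
      have hemb : (Prod.Lex ((· < ·) : ℕ → ℕ → Prop) (R n)) ↪r
          Subrel (Prod.Lex ((· < ·) : ℕ → ℕ → Prop) (R n)) B := by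
        refine RelEmbedding.ofMonotone
          (fun p => ⟨((g p.1 : ℕ), ↑(f (g p.1) p.2)), (f (g p.1) p.2).2⟩) ?_
        rintro ⟨i, y⟩ ⟨j, z⟩ hpq
        rw [Prod.lex_def] at hpq
        dsimp only at hpq
        show Prod.Lex _ _ ((g i : ℕ), _) ((g j : ℕ), _)
        rcases hpq with hlt | ⟨heq, hr⟩
        · exact Prod.Lex.left _ _ (Subtype.coe_lt_coe.2 (g.lt_iff_lt.2 hlt))
        · subst heq
          exact Prod.Lex.right _ ((f (g i)).map_rel_iff.2 hr)
      have hle : β * omega0 ≤ type (Subrel (Prod.Lex ((· < ·) : ℕ → ℕ → Prop) (R n)) B) := by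
        have := type_le_iff'.2 ⟨hemb⟩
        calc β * omega0 = type (R (n + 1)) := by rw [typeR (n + 1), hbound]
          _ ≤ _ := this
      rw [hRsucc] at h
      exact absurd h (not_lt.2 hle)

end Stmt14Aux

namespace Stmt14Aux

theorem lift_omega0_pow_nat : ∀ k : ℕ,
    Ordinal.lift.{u} (omega0 ^ (k : Ordinal.{0})) = omega0 ^ (k : Ordinal.{u})
  | 0 => by simp
  | k + 1 => by
    rw [Nat.cast_succ, Nat.cast_succ, opow_add, opow_add, opow_one, opow_one, lift_mul,
      lift_omega0_pow_nat k, lift_omega0]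

end Stmt14Aux


open Stmt14Aux

/-- For every n ≥ 1, the ideal I_{ω^n} of subsets of ω^n not containing a copy of
ω^n is isomorphic to the n-fold Fubini power Fin^n of the Fréchet ideal. -/
theorem stmt14 (n : ℕ) (hn : 1 ≤ n) :
    ∃ e : (Set.Iio (omega0 ^ (n : Ordinal))) ≃ T (n - 1),
      ∀ A : Set (Set.Iio (omega0 ^ (n : Ordinal))),
        A ∈ ordIdeal (omega0 ^ (n : Ordinal)) ↔ e '' A ∈ finPow (n - 1) := by
  obtain ⟨m, rfl⟩ : ∃ m, n = m + 1 := ⟨n - 1, (Nat.succ_pred_eq_of_pos hn).symm⟩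
  set γ := omega0 ^ (((m + 1 : ℕ) : Ordinal)) with hγ
  haveI : IsWellOrder γ.ToType (· < ·) := isWellOrder_lt
  have hlift : Ordinal.lift.{u_1, u_1} (type ((· < ·) : γ.ToType → γ.ToType → Prop)) =
      Ordinal.lift.{u_1, 0} (type (R m)) := by
    rw [type_toType, lift_id, typeR m, ← Nat.cast_succ, lift_omega0_pow_nat]
  obtain ⟨F2⟩ : Nonempty (((· < ·) : γ.ToType → γ.ToType → Prop) ≃r R m) :=
    lift_type_eq.1 hlift
  let F : ((· < ·) : Iio γ → Iio γ → Prop) ≃r R m :=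
    (ToType.mk (o := γ)).toRelIsoLT.trans F2
  refine ⟨F.toEquiv, fun A => ?_⟩
  have key : Nonempty (Iio γ ↪o ↥A) ↔
      type (R m) ≤ type (Stmt14Aux.Subrel (R m) (⇑F '' A)) := by
    rw [type_le_iff']
    constructor
    · rintro ⟨f⟩
      exact ⟨F.symm.toRelEmbedding.trans (f.ltEmbedding.trans (imageSubrel F A).toRelEmbedding)⟩
    · rintro ⟨f⟩
      exact ⟨RelEmbedding.orderEmbeddingOfLTEmbedding
        (F.toRelEmbedding.trans (f.trans (imageSubrel F A).symm.toRelEmbedding))⟩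
  have himg : ⇑F.toEquiv '' A = ⇑F '' A := rfl
  show ¬ Nonempty (Iio γ ↪o ↥A) ↔ _
  rw [key, not_le, typeR m]
  exact (main m (⇑F.toEquiv '' A)).symm
end

section
/- Let γ be a countable limit ordinal, ⟨δ_n⟩ increasing cofinal in γ∖{0}, L = Σ_{n∈ω} L_n with L_n ≅ ω^{δ_n} pairwise disjoint, and for A ⊆ L, m ∈ ω set S^m_A = {n : the order type of A ∩ L_n is ≥ ω^{δ_m}}. Then A ⊆ L contains a copy of L if and only if S^m_A is infinite for every m ∈ ω. -/
open Ordinal Set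

/-- The order type of a set in a linear order: the (unique, when it exists)
ordinal `o` such that the set is order-isomorphic to `Set.Iio o`. -/
noncomputable def otypeOf {X : Type*} [LinearOrder X] (s : Set X) : Ordinal :=
  sInf {o : Ordinal | Nonempty (s ≃o Set.Iio o)}

lemma iso_Iio_type {X : Type u} [LinearOrder X] [WellFoundedLT X] (s : Set X) :
    Nonempty (s ≃o Iio (Ordinal.type ((· < ·) : s → s → Prop))) := by
  set t := Ordinal.type ((· < ·) : s → s → Prop) with ht
  haveI : IsWellOrder t.ToType (· < ·) := isWellOrder_lt
  have h1 : Ordinal.type ((· < ·) : s → s → Prop)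
      = Ordinal.type ((· < ·) : t.ToType → t.ToType → Prop) := by
    rw [Ordinal.type_toType]
  have : Nonempty (((· < ·) : s → s → Prop) ≃r ((· < ·) : t.ToType → t.ToType → Prop)) :=
    Ordinal.type_eq.1 h1
  exact ⟨(OrderIso.ofRelIsoLT this.some).trans (Ordinal.ToType.mk (o := t)).symm⟩

lemma Iio_iso_inj {a b : Ordinal.{u}} (e : Iio a ≃o Iio b) : a = b := by
  haveI : IsWellOrder a.ToType (· < ·) := isWellOrder_lt
  haveI : IsWellOrder b.ToType (· < ·) := isWellOrder_lt
  have e2 : a.ToType ≃o b.ToType :=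
    (Ordinal.ToType.mk (o := a)).symm.trans (e.trans (Ordinal.ToType.mk (o := b)))
  have := @RelIso.ordinal_type_eq a.ToType b.ToType (· < ·) (· < ·) _ _ e2.toRelIsoLT
  rwa [Ordinal.type_toType, Ordinal.type_toType] at this

lemma otypeOf_eq_of_iso {X : Type*} [LinearOrder X] (s : Set X) {o : Ordinal}
    (e : s ≃o Iio o) : otypeOf s = o := by
  have : {o' : Ordinal | Nonempty (s ≃o Set.Iio o')} = {o} := by
    ext o'
    simp only [mem_setOf_eq, mem_singleton_iff]
    exact ⟨fun ⟨e'⟩ => Iio_iso_inj (e'.symm.trans e), fun h => h ▸ ⟨e⟩⟩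
  rw [otypeOf, this, csInf_singleton]

lemma otypeOf_spec {a : Ordinal.{u}} (s : Set (Iio a)) :
    Nonempty (s ≃o Iio (otypeOf s : Ordinal.{u})) := by
  classical
  let e0 := Ordinal.ToType.mk (o := a)
  have e1 : s ≃o ((e0 : Iio a → a.ToType) '' s) :=
    (e0.strictMono.strictMonoOn s).orderIso _ _
  obtain ⟨e2⟩ := iso_Iio_type ((e0 : Iio a → a.ToType) '' s)
  have e3 := e1.trans e2
  rw [otypeOf_eq_of_iso s e3]
  exact ⟨e3⟩

lemma le_of_Iio_embed {a b : Ordinal.{u}} (f : Iio a ↪o Iio b) : a ≤ b := by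
  haveI : IsWellOrder a.ToType (· < ·) := isWellOrder_lt
  haveI : IsWellOrder b.ToType (· < ·) := isWellOrder_lt
  have g : a.ToType ↪o b.ToType :=
    ((Ordinal.ToType.mk (o := a)).symm.toOrderEmbedding.trans f).trans
      (Ordinal.ToType.mk (o := b)).toOrderEmbedding
  have := @RelEmbedding.ordinal_type_le a.ToType b.ToType (· < ·) (· < ·) _ _ g.ltEmbedding
  rwa [Ordinal.type_toType, Ordinal.type_toType] at this

lemma embed_of_le_otypeOf {a c : Ordinal.{u}} {s : Set (Iio a)} (h : c ≤ otypeOf s) :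
    Nonempty (Iio c ↪o s) := by
  obtain ⟨e⟩ := otypeOf_spec s
  have incl : Iio c ↪o Iio (otypeOf s) :=
    OrderEmbedding.ofStrictMono (fun x => ⟨x.1, lt_of_lt_of_le x.2 h⟩)
      (fun x y hxy => by exact hxy)
  exact ⟨incl.trans e.symm.toOrderEmbedding⟩

/-- Partial sums `ω^δ 0 + ⋯ + ω^δ (N-1)`. -/
noncomputable def Csum (δ : ℕ → Ordinal) : ℕ → Ordinal
  | 0 => 0
  | N + 1 => Csum δ N + omega0 ^ δ N

lemma Csum_mono (δ : ℕ → Ordinal) : Monotone (Csum δ) :=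
  monotone_nat_of_le_succ fun _ => le_self_add

lemma Csum_lt (δ : ℕ → Ordinal) (hδmono : StrictMono δ) {k N : ℕ} (hN : N ≤ k) :
    Csum δ N < omega0 ^ δ k := by
  induction N with
  | zero => simpa [Csum] using opow_pos (δ k) omega0_pos
  | succ N ih =>
    exact principal_add_omega0_opow (δ k) (ih (Nat.le_of_succ_le hN))
      ((opow_lt_opow_iff_right one_lt_omega0).2 (hδmono (Nat.lt_of_succ_le hN)))

/-- Let γ be a countable limit ordinal, ⟨δ_n⟩ strictly increasing, nonzero, cofinal
in γ, and L = Σ_{n∈ω} L_n (lexicographic sum) with L_n ≅ ω^{δ_n}. For A ⊆ L and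
m ∈ ω let S^m_A = {n : type(A ∩ L_n) ≥ ω^{δ_m}}. Then A contains a copy of L iff
S^m_A is infinite for every m. -/
theorem stmt16 (γ : Ordinal) (hc : γ.card ≤ Cardinal.aleph0) (hl : Order.IsSuccLimit γ)
    (δ : ℕ → Ordinal) (hδmono : StrictMono δ) (hδpos : ∀ n, 0 < δ n)
    (hδlt : ∀ n, δ n < γ) (hcof : ∀ β < γ, ∃ n, β < δ n) :
    ∀ A : Set (Σₗ n : ℕ, (Set.Iio (omega0 ^ δ n))),
      Nonempty ((Σₗ n : ℕ, (Set.Iio (omega0 ^ δ n))) ↪o A) ↔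
        ∀ m : ℕ,
          {n : ℕ | omega0 ^ δ m ≤
            otypeOf {y : Set.Iio (omega0 ^ δ n) | toLex ⟨n, y⟩ ∈ A}}.Infinite := by
  classical
  intro A
  set B : ∀ n : ℕ, Set (Iio (omega0 ^ δ n)) :=
    fun n => {y : Set.Iio (omega0 ^ δ n) | toLex ⟨n, y⟩ ∈ A} with hB
  constructor
  · rintro ⟨f⟩ m
    apply Set.infinite_of_forall_exists_gt
    intro N
    by_contra hcon
    push_neg at hcon
    have hsmall : ∀ n, N < n → otypeOf (B n) < omega0 ^ δ m := by
      intro n hn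
      by_contra hle
      exact absurd (hcon n (not_lt.1 hle)) (not_le.2 hn)
    -- choose k
    obtain ⟨k0, hk0⟩ := hcof (δ m + 1) (by rw [Ordinal.add_one_eq_succ]; exact hl.succ_lt (hδlt m))
    set k := max k0 (N + 1) with hk
    have hδk : δ m + 1 < δ k := lt_of_lt_of_le hk0 (hδmono.monotone (le_max_left _ _))
    have hNk : N + 1 ≤ k := le_max_right _ _
    -- isomorphisms of the pieces with ordinals
    have eiso : ∀ n, (B n) ≃o Iio (otypeOf (B n)) := fun n => (otypeOf_spec (B n)).some
    -- the rank function
    set ψ : ∀ (i : ℕ) (a : Iio (omega0 ^ δ i)), a ∈ B i → Ordinal :=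
      fun i a ha =>
        if i ≤ N then Csum δ i + a.val
        else Csum δ (N + 1) + (omega0 ^ δ m * (i - (N + 1) : ℕ) + ((eiso i) ⟨a, ha⟩).val)
        with hψdef
    set D : Ordinal := Csum δ (N + 1) + omega0 ^ (δ m + 1) with hD
    have homega : omega0 ^ (δ m + 1) = omega0 ^ δ m * omega0 := by
      rw [Ordinal.add_one_eq_succ, opow_succ]
    -- bound
    have hbound : ∀ i a ha, ψ i a ha < D := by
      intro i a ha
      rw [hψdef]
      dsimp only
      split_ifs with hi
      · refine lt_of_lt_of_le (lt_of_lt_of_le ?_ (Csum_mono δ (Nat.succ_le_succ hi)))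
          (le_self_add)
        calc Csum δ i + a.val < Csum δ i + omega0 ^ δ i := by
              exact add_lt_add_right a.2 _
          _ = Csum δ (i + 1) := rfl
      · rw [hD, homega]
        refine add_lt_add_right ?_ _
        calc omega0 ^ δ m * (i - (N + 1) : ℕ) + ((eiso i) ⟨a, ha⟩).val
            < omega0 ^ δ m * (i - (N + 1) : ℕ) + omega0 ^ δ m :=
              add_lt_add_right (lt_trans ((eiso i) ⟨a, ha⟩).2 (hsmall i (by omega))) _
          _ = omega0 ^ δ m * ((i - (N + 1) : ℕ) + 1) := by
              rw [mul_add, mul_one]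
          _ ≤ omega0 ^ δ m * omega0 := by
              refine mul_le_mul_right (le_of_lt ?_) _
              have : ((i - (N + 1) : ℕ) : Ordinal) + 1 = ((i - (N + 1) + 1 : ℕ) : Ordinal) := by
                push_cast; ring
              rw [this]
              exact nat_lt_omega0 _
      -- strict monotonicity
    have hmono : ∀ (i : ℕ) (a : Iio (omega0 ^ δ i)) (ha : a ∈ B i)
        (j : ℕ) (b : Iio (omega0 ^ δ j)) (hb : b ∈ B j),
        (toLex ⟨i, a⟩ : Σₗ n : ℕ, (Set.Iio (omega0 ^ δ n))) < toLex ⟨j, b⟩ →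
          ψ i a ha < ψ j b hb := by
      intro i a ha j b hb hlt
      rcases Sigma.Lex.lt_def.1 hlt with hij | ⟨hij, hab⟩
      · -- i < j
        have hij' : i < j := hij
        rw [hψdef]
        dsimp only
        split_ifs with h1 h2
        · -- both ≤ N
          calc Csum δ i + a.val < Csum δ (i + 1) := add_lt_add_right a.2 _
            _ ≤ Csum δ j := Csum_mono δ (by omega)
            _ ≤ Csum δ j + b.val := le_self_add
        · -- i ≤ N < j
          calc Csum δ i + a.val < Csum δ (i + 1) := add_lt_add_right a.2 _
            _ ≤ Csum δ (N + 1) := Csum_mono δ (by omega)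
            _ ≤ _ := le_self_add
        · omega
        · -- both > N
          refine add_lt_add_right ?_ _
          calc omega0 ^ δ m * (i - (N + 1) : ℕ) + ((eiso i) ⟨a, ha⟩).val
              < omega0 ^ δ m * (i - (N + 1) : ℕ) + omega0 ^ δ m :=
                add_lt_add_right (lt_trans ((eiso i) ⟨a, ha⟩).2 (hsmall i (by omega))) _
            _ = omega0 ^ δ m * ((i - (N + 1) : ℕ) + 1) := by rw [mul_add, mul_one]
            _ ≤ omega0 ^ δ m * ((j - (N + 1) : ℕ)) := by
                refine mul_le_mul_right ?_ _
                have : ((i - (N + 1) : ℕ) : Ordinal) + 1 = ((i - (N + 1) + 1 : ℕ) : Ordinal) := by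
                  push_cast; ring
                rw [this]
                exact Nat.cast_le.2 (by omega)
            _ ≤ _ := le_self_add
      · -- same fiber
        have hij' : i = j := hij
        subst hij'
        have hab' : a < b := hab
        rw [hψdef]
        dsimp only
        split_ifs with h1
        · exact add_lt_add_right (Subtype.coe_lt_coe.2 hab') _
        · refine add_lt_add_right (add_lt_add_right ?_ _) _
          exact Subtype.coe_lt_coe.2 (((eiso i).lt_iff_lt).2 (Subtype.mk_lt_mk.2 hab'))
    -- build the embedding Iio (ω ^ δ k) ↪o Iio D
    have hmem : ∀ x : A, ((ofLex x.val).2 : Iio (omega0 ^ δ (ofLex x.val).1)) ∈ B (ofLex x.val).1 :=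
      fun x => x.2
    have hg : ∀ y : Iio (omega0 ^ δ k), ∃ o : Ordinal, o < D := fun _ => ⟨0, by
      rw [hD]
      exact lt_of_lt_of_le (lt_of_le_of_lt (zero_le)
        (opow_pos _ omega0_pos)) (le_add_self)⟩
    set g : Iio (omega0 ^ δ k) → Iio D := fun y =>
      ⟨ψ (ofLex (f (toLex ⟨k, y⟩)).val).1 (ofLex (f (toLex ⟨k, y⟩)).val).2
        (hmem (f (toLex ⟨k, y⟩))), hbound _ _ _⟩ with hgdef
    have hgmono : StrictMono g := by
      intro y y' hyy'
      have h1 : (toLex ⟨k, y⟩ : Σₗ n : ℕ, (Set.Iio (omega0 ^ δ n))) < toLex ⟨k, y'⟩ :=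
        Sigma.Lex.right _ _ hyy'
      have h2 : f (toLex ⟨k, y⟩) < f (toLex ⟨k, y'⟩) := f.lt_iff_lt.2 h1
      have h3 : (f (toLex ⟨k, y⟩)).val < (f (toLex ⟨k, y'⟩)).val := h2
      exact hmono _ _ _ _ _ _ h3
    have := le_of_Iio_embed (OrderEmbedding.ofStrictMono g hgmono)
    have hDlt : D < omega0 ^ δ k := by
      rw [hD]
      exact principal_add_omega0_opow (δ k) (Csum_lt δ hδmono hNk)
        ((opow_lt_opow_iff_right one_lt_omega0).2 hδk)
    exact absurd this (not_le.2 hDlt)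
  · intro h
    -- choose a strictly increasing selection
    have key : ∀ k a, ∃ b, b ∈ {n : ℕ | omega0 ^ δ k ≤ otypeOf (B n)} ∧ a < b := by
      intro k a
      obtain ⟨b, hb, hab⟩ := (h k).exists_gt a
      exact ⟨b, hb, hab⟩
    set n : ℕ → ℕ := fun k =>
      Nat.rec (Classical.choose (key 0 0))
        (fun k ih => Classical.choose (key (k + 1) ih)) k with hn
    have hmemn : ∀ k, omega0 ^ δ k ≤ otypeOf (B (n k)) := by
      intro k
      cases k with
      | zero => exact (Classical.choose_spec (key 0 0)).1
      | succ k => exact (Classical.choose_spec (key (k + 1) (n k))).1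
    have hnmono : StrictMono n :=
      strictMono_nat_of_lt_succ fun k => (Classical.choose_spec (key (k + 1) (n k))).2
    have e : ∀ k, Iio (omega0 ^ δ k) ↪o (B (n k)) := by
      intro k
      exact (embed_of_le_otypeOf (hmemn k)).some
    set F : (Σₗ n : ℕ, (Set.Iio (omega0 ^ δ n))) → A := fun x =>
      ⟨toLex ⟨n (ofLex x).1, ((e (ofLex x).1) (ofLex x).2).val⟩, ((e (ofLex x).1) (ofLex x).2).2⟩
      with hF
    have hFmono : StrictMono F := by
      rintro ⟨i, a⟩ ⟨j, b⟩ hab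
      rcases Sigma.Lex.lt_def.1 hab with hij | ⟨hij, hab'⟩
      · have hij2 : i < j := hij
        exact Sigma.Lex.left _ _ (hnmono hij2)
      · have hij2 : i = j := hij
        subst hij2
        have : a < b := hab'
        exact Sigma.Lex.right _ _ (Subtype.coe_lt_coe.2 (((e i).lt_iff_lt).2 this))
    exact ⟨OrderEmbedding.ofStrictMono F hFmono⟩
end

section
/- With L = Σ_{n∈ω} L_n, L_n ≅ ω^{δ_n}, and I = {A ⊆ L : L does not embed into A}: a subset A ⊆ L belongs to I if and only if S^m_A = ∅ for some m ∈ ω, where S^m_A = {n : order type of A∩L_n ≥ ω^{δ_m}}. Moreover, if A intersects only finitely many L_n, then A ∈ I. -/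
open Ordinal Set

universe u

instance sigmaLexWF {ι : Type*} [LinearOrder ι] [WellFoundedLT ι]
    {α : ι → Type*} [∀ i, LinearOrder (α i)] [∀ i, WellFoundedLT (α i)] :
    WellFoundedLT (Σₗ i, α i) := by
  constructor
  have wfP : WellFounded (PSigma.Lex ((· < ·) : ι → ι → Prop)
      (fun i => ((· < ·) : α i → α i → Prop))) :=
    (IsWellFounded.wf (r := ((· < ·) : ι → ι → Prop))).psigma_lex fun i => IsWellFounded.wf
  have hw : WellFounded (InvImage (PSigma.Lex ((· < ·) : ι → ι → Prop)
      (fun i => ((· < ·) : α i → α i → Prop)))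
      (fun x : Σₗ i, α i => ⟨(ofLex x).1, (ofLex x).2⟩)) := InvImage.wf _ wfP
  refine Subrelation.wf ?_ hw
  intro a b h
  have h' : Sigma.Lex ((· < ·)) (fun _ => (· < ·)) (ofLex a) (ofLex b) := h
  cases h' with
  | left x y hij => exact PSigma.Lex.left _ _ hij
  | right x y hxy => exact PSigma.Lex.right _ hxy

theorem type_Iio' (l : Ordinal.{u}) :
    type ((· < ·) : Iio l → Iio l → Prop) = Ordinal.lift.{u+1} l := by
  rw [← typein_ordinal l, ← type_subrel]
  rfl

set_option linter.deprecated false in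
theorem lift_otypeOf {l : Ordinal.{u}} (s : Set (Iio l)) :
    Ordinal.lift.{u+1, u} (otypeOf s) = type ((· < ·) : s → s → Prop) := by
  have hle : type ((· < ·) : s → s → Prop) ≤ type ((· < ·) : Iio l → Iio l → Prop) :=
    (OrderEmbedding.subtype _).ltEmbedding.ordinal_type_le
  rw [type_Iio' l] at hle
  obtain ⟨o, ho⟩ := Ordinal.mem_range_lift_of_le.{u, u+1} hle
  have key : {o' : Ordinal.{u} | Nonempty (s ≃o Set.Iio o')} = {o} := by
    apply Set.eq_singleton_iff_unique_mem.mpr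
    constructor
    · have : type ((· < ·) : s → s → Prop) = type ((· < ·) : Iio o → Iio o → Prop) := by
        rw [type_Iio' o, ho]
      obtain ⟨e⟩ := type_eq.mp this
      exact ⟨OrderIso.ofRelIsoLT e⟩
    · rintro o' ⟨e⟩
      have : type ((· < ·) : s → s → Prop) = type ((· < ·) : Iio o' → Iio o' → Prop) :=
        e.toRelIsoLT.ordinal_type_eq
      rw [type_Iio' o', ← ho] at this
      exact (Ordinal.lift_inj.mp this.symm)
  rw [otypeOf, key, csInf_singleton, ho]

theorem otypeOf_empty {l : Ordinal.{u}} : otypeOf (∅ : Set (Iio l)) = (0 : Ordinal.{u}) := by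
  have h0 : Ordinal.lift.{u+1, u} (otypeOf (∅ : Set (Iio l))) = 0 := by
    rw [lift_otypeOf]
    exact type_eq_zero_of_empty _
  rw [show (0 : Ordinal.{u+1}) = Ordinal.lift.{u+1, u} 0 from (Ordinal.lift_zero).symm] at h0
  exact Ordinal.lift_inj.{u+1, u}.mp h0

theorem otypeOf_le {l : Ordinal.{u}} (s : Set (Iio l)) : otypeOf s ≤ l := by
  rw [← Ordinal.lift_le.{u+1}, lift_otypeOf s, ← type_Iio' l]
  exact (OrderEmbedding.subtype _).ltEmbedding.ordinal_type_le

/-- Claim B: if all fibers have order type at most `ω ^ δ m` and some `δ n₀`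
exceeds `δ m + 1`, then `L` does not embed into `A`. -/
theorem claimB {δ : ℕ → Ordinal.{u}} (hδmono : StrictMono δ)
    (A : Set (Σₗ n : ℕ, (Set.Iio (omega0 ^ δ n)))) (m : ℕ)
    (hm : ∀ n, otypeOf {y : Set.Iio (omega0 ^ δ n) | toLex ⟨n, y⟩ ∈ A} ≤ omega0 ^ δ m)
    (n₀ : ℕ) (hn₀ : δ m + 1 < δ n₀) :
    ¬ Nonempty ((Σₗ n : ℕ, (Set.Iio (omega0 ^ δ n))) ↪o A) := by
  rintro ⟨f⟩
  -- type of L is at most type of A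
  have hLA : type ((· < ·) : (Σₗ n : ℕ, (Set.Iio (omega0 ^ δ n))) → (Σₗ n : ℕ, (Set.Iio (omega0 ^ δ n))) → Prop) ≤ type ((· < ·) : A → A → Prop) :=
    f.ltEmbedding.ordinal_type_le
  -- the fiber n₀ embeds into L
  have hfib : Ordinal.lift.{u+1, u} (omega0 ^ δ n₀) ≤ type ((· < ·) : (Σₗ n : ℕ, (Set.Iio (omega0 ^ δ n))) → (Σₗ n : ℕ, (Set.Iio (omega0 ^ δ n))) → Prop) := by
    rw [← type_Iio']
    have e : Iio (omega0 ^ δ n₀) ↪o (Σₗ n : ℕ, (Set.Iio (omega0 ^ δ n))) :=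
      OrderEmbedding.ofStrictMono (fun x => toLex ⟨n₀, x⟩)
        (fun x y h => Sigma.Lex.lt_def.mpr (Or.inr ⟨rfl, h⟩))
    exact e.ltEmbedding.ordinal_type_le
  -- embed A into a lexicographic product
  have en : ∀ n, ((· < ·) : {y : Set.Iio (omega0 ^ δ n) | toLex ⟨n, y⟩ ∈ A} →
      {y : Set.Iio (omega0 ^ δ n) | toLex ⟨n, y⟩ ∈ A} → Prop) ↪r
      ((· < ·) : Iio (omega0 ^ δ m) → Iio (omega0 ^ δ m) → Prop) := by
    intro n
    refine Classical.choice (type_le_iff'.mp ?_)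
    rw [type_Iio', ← lift_otypeOf]
    exact Ordinal.lift_le.mpr (hm n)
  haveI : IsWellOrder (ULift.{u+1} ℕ) (ULift.down ⁻¹'o ((· < ·) : ℕ → ℕ → Prop)) :=
    (RelIso.preimage Equiv.ulift _).toRelEmbedding.isWellOrder
  have hA : type ((· < ·) : A → A → Prop) ≤
      Ordinal.lift.{u+1, u} (omega0 ^ δ m) * Ordinal.lift.{u+1, 0} omega0 := by
    have key : type ((· < ·) : A → A → Prop) ≤
        type (Prod.Lex (ULift.down ⁻¹'o ((· < ·) : ℕ → ℕ → Prop))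
          ((· < ·) : Iio (omega0 ^ δ m) → Iio (omega0 ^ δ m) → Prop)) := by
      refine (RelEmbedding.ofMonotone
        (fun a => (⟨(ofLex a.1).1⟩, en (ofLex a.1).1 ⟨(ofLex a.1).2, a.2⟩)) ?_).ordinal_type_le
      rintro ⟨a, ha⟩ ⟨b, hb⟩ hab
      have h' : Sigma.Lex ((· < ·)) (fun _ => (· < ·)) (ofLex a) (ofLex b) := hab
      cases h' with
      | left x y hij => exact Prod.Lex.left _ _ hij
      | right x y hxy =>
        exact Prod.Lex.right _ ((en _).map_rel_iff.mpr (Subtype.mk_lt_mk.mpr hxy))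
    rw [type_prod_lex, type_Iio', type_uLift, type_nat_lt] at key
    exact key
  have hlast : Ordinal.lift.{u+1, u} (omega0 ^ δ n₀) ≤
      Ordinal.lift.{u+1, u} (omega0 ^ (δ m + 1)) := by
    calc Ordinal.lift.{u+1, u} (omega0 ^ δ n₀) ≤ type ((· < ·) : A → A → Prop) :=
          hfib.trans hLA
    _ ≤ Ordinal.lift.{u+1, u} (omega0 ^ δ m) * Ordinal.lift.{u+1, 0} omega0 := hA
    _ = Ordinal.lift.{u+1, u} (omega0 ^ (δ m + 1)) := by
        rw [add_one_eq_succ, opow_succ, Ordinal.lift_mul, Ordinal.lift_omega0,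
          Ordinal.lift_omega0]
  rw [Ordinal.lift_le, opow_le_opow_iff_right one_lt_omega0] at hlast
  exact absurd hlast (not_le.mpr hn₀)

/-- Claim A: if for every `m` some fiber of `A` has order type at least `ω ^ δ m`,
then `L` embeds into `A`. -/
theorem claimA {δ : ℕ → Ordinal.{u}} (hδmono : StrictMono δ)
    (A : Set (Σₗ n : ℕ, (Set.Iio (omega0 ^ δ n))))
    (h : ∀ m, ∃ n, omega0 ^ δ m ≤
      otypeOf {y : Set.Iio (omega0 ^ δ n) | toLex ⟨n, y⟩ ∈ A}) :
    Nonempty ((Σₗ n : ℕ, (Set.Iio (omega0 ^ δ n))) ↪o A) := by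
  -- the recursively chosen fibers
  set g : ℕ → ℕ := fun k => Nat.rec (h 0).choose (fun _ gk => (h (gk + 1)).choose) k with hg
  have hg0 : omega0 ^ δ 0 ≤ otypeOf {y : Set.Iio (omega0 ^ δ (g 0)) | toLex ⟨g 0, y⟩ ∈ A} :=
    (h 0).choose_spec
  have hgs : ∀ k, omega0 ^ δ (g k + 1) ≤
      otypeOf {y : Set.Iio (omega0 ^ δ (g (k + 1))) | toLex ⟨g (k + 1), y⟩ ∈ A} :=
    fun k => (h (g k + 1)).choose_spec
  -- basic index bound: if `ω ^ δ i ≤` the type of the fiber over `j` then `i ≤ j`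
  have hidx : ∀ i j, omega0 ^ δ i ≤
      otypeOf {y : Set.Iio (omega0 ^ δ j) | toLex ⟨j, y⟩ ∈ A} → i ≤ j := by
    intro i j hij
    have := hij.trans (otypeOf_le _)
    rw [opow_le_opow_iff_right one_lt_omega0] at this
    exact (hδmono.le_iff_le).mp this
  have hmono : StrictMono g := by
    refine strictMono_nat_of_lt_succ fun k => ?_
    have := hidx _ _ (hgs k)
    omega
  have hk : ∀ k, k ≤ g k := fun k => hmono.le_apply
  have hbound : ∀ k, omega0 ^ δ k ≤
      otypeOf {y : Set.Iio (omega0 ^ δ (g k)) | toLex ⟨g k, y⟩ ∈ A} := by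
    intro k
    cases k with
    | zero => exact hg0
    | succ k =>
      refine le_trans ?_ (hgs k)
      rw [opow_le_opow_iff_right one_lt_omega0]
      exact hδmono.monotone (by have := hk k; omega)
  -- embeddings of each fiber
  have e : ∀ k, ((· < ·) : Iio (omega0 ^ δ k) → Iio (omega0 ^ δ k) → Prop) ↪r
      ((· < ·) : {y : Set.Iio (omega0 ^ δ (g k)) | toLex ⟨g k, y⟩ ∈ A} →
        {y : Set.Iio (omega0 ^ δ (g k)) | toLex ⟨g k, y⟩ ∈ A} → Prop) := by
    intro k
    refine Classical.choice (type_le_iff'.mp ?_)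
    rw [type_Iio', ← lift_otypeOf]
    exact Ordinal.lift_le.mpr (hbound k)
  refine ⟨OrderEmbedding.ofStrictMono
    (fun z => ⟨toLex ⟨g (ofLex z).1, (e (ofLex z).1 (ofLex z).2).1⟩,
      (e (ofLex z).1 (ofLex z).2).2⟩) ?_⟩
  intro a b hab
  have h' : Sigma.Lex ((· < ·)) (fun _ => (· < ·)) (ofLex a) (ofLex b) := hab
  cases h' with
  | left x y hij =>
    exact Subtype.mk_lt_mk.mpr (Sigma.Lex.lt_def.mpr (Or.inl (hmono hij)))
  | right x y hxy =>
    exact Subtype.mk_lt_mk.mpr (Sigma.Lex.lt_def.mpr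
      (Or.inr ⟨rfl, Subtype.coe_lt_coe.mpr ((e _).map_rel_iff.mpr hxy)⟩))

/-- With L = Σ_{n∈ω} L_n, L_n ≅ ω^{δ_n}, and I = {A ⊆ L : L does not embed into A}:
A ∈ I iff S^m_A = ∅ for some m, where S^m_A = {n : type(A ∩ L_n) ≥ ω^{δ_m}};
moreover, if A meets only finitely many L_n then A ∈ I. -/
theorem stmt17 (γ : Ordinal) (hc : γ.card ≤ Cardinal.aleph0) (hl : Order.IsSuccLimit γ)
    (δ : ℕ → Ordinal) (hδmono : StrictMono δ) (hδpos : ∀ n, 0 < δ n)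
    (hδlt : ∀ n, δ n < γ) (hcof : ∀ β < γ, ∃ n, β < δ n) :
    (∀ A : Set (Σₗ n : ℕ, (Set.Iio (omega0 ^ δ n))),
      ¬ Nonempty ((Σₗ n : ℕ, (Set.Iio (omega0 ^ δ n))) ↪o A) ↔
        ∃ m : ℕ,
          {n : ℕ | omega0 ^ δ m ≤
            otypeOf {y : Set.Iio (omega0 ^ δ n) | toLex ⟨n, y⟩ ∈ A}} = ∅) ∧
    (∀ A : Set (Σₗ n : ℕ, (Set.Iio (omega0 ^ δ n))),
      {n : ℕ | {y : Set.Iio (omega0 ^ δ n) | toLex ⟨n, y⟩ ∈ A}.Nonempty}.Finite →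
        ¬ Nonempty ((Σₗ n : ℕ, (Set.Iio (omega0 ^ δ n))) ↪o A)) := by
  constructor
  · intro A
    constructor
    · intro hni
      by_contra hno
      push_neg at hno
      refine hni (claimA hδmono A fun m => ?_)
      obtain ⟨n, hn⟩ := hno m
      exact ⟨n, hn⟩
    · rintro ⟨m, hm⟩
      rw [Set.eq_empty_iff_forall_notMem] at hm
      obtain ⟨n₀, hn₀⟩ := hcof (δ m + 1) (by rw [← Order.succ_eq_add_one]; exact hl.succ_lt (hδlt m))
      exact claimB hδmono A m (fun n => le_of_not_ge (hm n)) n₀ hn₀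
  · intro A hfin
    obtain ⟨b, hb⟩ := hfin.bddAbove
    obtain ⟨n₀, hn₀⟩ := hcof (δ (b + 1) + 1) (by rw [← Order.succ_eq_add_one]; exact hl.succ_lt (hδlt (b + 1)))
    refine claimB hδmono A (b + 1) (fun n => ?_) n₀ hn₀
    by_cases hne : {y : Set.Iio (omega0 ^ δ n) | toLex ⟨n, y⟩ ∈ A}.Nonempty
    · have hnb : n ≤ b := hb hne
      refine (otypeOf_le _).trans ?_
      rw [opow_le_opow_iff_right one_lt_omega0]
      exact hδmono.monotone (by omega)
    · rw [Set.not_nonempty_iff_eq_empty] at hne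
      rw [hne, otypeOf_empty]
      exact (Ordinal.opow_pos _ omega0_pos).le
end
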